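/- For every w ∈ ℝ^d, the sub-optimality gap of the regularized loss at w relative to the point −c/λ satisfies L_λ(w) − L_λ(−c/λ) ≤ 2λD² ‖w + c/λ‖₂². -/

import Mathlib

open Finset
open scoped InnerProductSpace BigOperators

noncomputable section

/-- The Gibbs distribution on a finite set `X ⊆ ℝ^d` with parameter `w`:
`φ(x; w) = exp(w·x) / ∑_{y ∈ X} exp(w·y)`. -/
def gibbs {d : ℕ} (X : Finset (EuclideanSpace ℝ (Fin d)))
    (w x : EuclideanSpace ℝ (Fin d)) : ℝ :=
  Real.exp ⟪w, x⟫_ℝ / ∑ y ∈ X, Real.exp ⟪w, y⟫_ℝ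

/-- Expectation of a real function under the Gibbs distribution. -/
def gibbsExp {d : ℕ} (X : Finset (EuclideanSpace ℝ (Fin d)))
    (w : EuclideanSpace ℝ (Fin d)) (f : EuclideanSpace ℝ (Fin d) → ℝ) : ℝ :=
  ∑ x ∈ X, gibbs X w x * f x

/-- Variance of a real function under the Gibbs distribution. -/
def gibbsVar {d : ℕ} (X : Finset (EuclideanSpace ℝ (Fin d)))
    (w : EuclideanSpace ℝ (Fin d)) (f : EuclideanSpace ℝ (Fin d) → ℝ) : ℝ :=
  gibbsExp X w (fun x => f x ^ 2) - (gibbsExp X w f) ^ 2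

/-- Mean (a vector) of the Gibbs distribution. -/
def gibbsMean {d : ℕ} (X : Finset (EuclideanSpace ℝ (Fin d)))
    (w : EuclideanSpace ℝ (Fin d)) : EuclideanSpace ℝ (Fin d) :=
  ∑ x ∈ X, gibbs X w x • x

/-- The negative entropy `H(w) = E_{x ∼ φ(·;w)}[log φ(x;w)]`. -/
def negEnt {d : ℕ} (X : Finset (EuclideanSpace ℝ (Fin d)))
    (w : EuclideanSpace ℝ (Fin d)) : ℝ :=
  ∑ x ∈ X, gibbs X w x * Real.log (gibbs X w x)


/-- The fast/slow mixture generator `p(x;w) = (1−β)φ(x;w) + βφ(x;ρw)`. -/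
def pmix {d : ℕ} (X : Finset (EuclideanSpace ℝ (Fin d))) (β ρ : ℝ)
    (w x : EuclideanSpace ℝ (Fin d)) : ℝ :=
  (1 - β) * gibbs X w x + β * gibbs X (ρ • w) x

/-- The regularizer `R(w) = (1−β)H(w) + (β/ρ)H(ρw)`. -/
def reg {d : ℕ} (X : Finset (EuclideanSpace ℝ (Fin d))) (β ρ : ℝ)
    (w : EuclideanSpace ℝ (Fin d)) : ℝ :=
  (1 - β) * negEnt X w + (β / ρ) * negEnt X (ρ • w)

/-- The regularized loss `L_λ(w) = E_{x∼p(·;w)}[c·x] + λ R(w)`. -/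
def rloss {d : ℕ} (X : Finset (EuclideanSpace ℝ (Fin d))) (β ρ lam : ℝ)
    (c w : EuclideanSpace ℝ (Fin d)) : ℝ :=
  (∑ x ∈ X, pmix X β ρ w x * ⟪c, x⟫_ℝ) + lam * reg X β ρ w


namespace RlossAux

lemma exp_chord {t M : ℝ} (h : |t| ≤ M) (hM : 0 < M) :
    Real.exp t ≤ Real.cosh M + t * (Real.sinh M / M) := by
  have ha : 0 ≤ (M - t) / (2 * M) := by
    apply div_nonneg <;> nlinarith [abs_le.1 h]
  have hb : 0 ≤ (M + t) / (2 * M) := by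
    apply div_nonneg <;> nlinarith [abs_le.1 h]
  have hab : (M - t) / (2 * M) + (M + t) / (2 * M) = 1 := by field_simp; ring
  have key := convexOn_exp.2 (Set.mem_univ (-M)) (Set.mem_univ M) ha hb hab
  simp only [smul_eq_mul] at key
  have harg : (M - t) / (2 * M) * (-M) + (M + t) / (2 * M) * M = t := by
    field_simp; ring
  rw [harg] at key
  rw [Real.cosh_eq, Real.sinh_eq]
  calc Real.exp t ≤ (M - t) / (2 * M) * Real.exp (-M) + (M + t) / (2 * M) * Real.exp M := key
    _ = (Real.exp M + Real.exp (-M)) / 2 + t * ((Real.exp M - Real.exp (-M)) / 2 / M) := by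
        field_simp; ring

variable {d : ℕ} {X : Finset (EuclideanSpace ℝ (Fin d))}

lemma Zpos (hX : X.Nonempty) (v : EuclideanSpace ℝ (Fin d)) :
    0 < ∑ y ∈ X, Real.exp ⟪v, y⟫_ℝ :=
  Finset.sum_pos (fun _ _ => Real.exp_pos _) hX

lemma gibbs_pos (hX : X.Nonempty) (v x : EuclideanSpace ℝ (Fin d)) :
    0 < gibbs X v x := div_pos (Real.exp_pos _) (Zpos hX v)

lemma sum_gibbs (hX : X.Nonempty) (v : EuclideanSpace ℝ (Fin d)) :
    ∑ x ∈ X, gibbs X v x = 1 := by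
  simp only [gibbs, ← Finset.sum_div]
  exact div_self (ne_of_gt (Zpos hX v))

lemma inner_gibbsMean (v h : EuclideanSpace ℝ (Fin d)) :
    ⟪h, gibbsMean X v⟫_ℝ = ∑ x ∈ X, gibbs X v x * ⟪h, x⟫_ℝ := by
  rw [gibbsMean, inner_sum]
  exact Finset.sum_congr rfl fun x _ => real_inner_smul_right _ _ _

lemma logsumexp_smooth (hX : X.Nonempty) {D : ℝ} (hD : ∀ x ∈ X, ‖x‖ ≤ D)
    (v h : EuclideanSpace ℝ (Fin d)) :
    Real.log (∑ x ∈ X, Real.exp ⟪v + h, x⟫_ℝ)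
      ≤ Real.log (∑ x ∈ X, Real.exp ⟪v, x⟫_ℝ) + ⟪h, gibbsMean X v⟫_ℝ
        + 2 * D ^ 2 * ‖h‖ ^ 2 := by
  set Z := ∑ y ∈ X, Real.exp ⟪v, y⟫_ℝ with hZdef
  have hZ : 0 < Z := Zpos hX v
  set m : ℝ := ∑ x ∈ X, gibbs X v x * ⟪h, x⟫_ℝ with hmdef
  have hm : ⟪h, gibbsMean X v⟫_ℝ = m := inner_gibbsMean v h
  have hbx : ∀ x ∈ X, |⟪h, x⟫_ℝ| ≤ D * ‖h‖ := by
    intro x hx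
    calc |⟪h, x⟫_ℝ| ≤ ‖h‖ * ‖x‖ := abs_real_inner_le_norm _ _
      _ ≤ ‖h‖ * D := mul_le_mul_of_nonneg_left (hD x hx) (norm_nonneg _)
      _ = D * ‖h‖ := mul_comm _ _
  have hDh : 0 ≤ D * ‖h‖ := by
    obtain ⟨x0, hx0⟩ := hX
    have := (abs_nonneg _).trans (hbx x0 hx0)
    linarith
  have hmabs : |m| ≤ D * ‖h‖ := by
    calc |m| ≤ ∑ x ∈ X, |gibbs X v x * ⟪h, x⟫_ℝ| := Finset.abs_sum_le_sum_abs _ _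
      _ ≤ ∑ x ∈ X, gibbs X v x * (D * ‖h‖) := by
          apply Finset.sum_le_sum
          intro x hx
          rw [abs_mul, abs_of_pos (gibbs_pos hX v x)]
          exact mul_le_mul_of_nonneg_left (hbx x hx) (le_of_lt (gibbs_pos hX v x))
      _ = D * ‖h‖ := by rw [← Finset.sum_mul, sum_gibbs hX, one_mul]
  set M : ℝ := 2 * (D * ‖h‖) with hMdef
  have key : ∑ x ∈ X, gibbs X v x * Real.exp (⟪h, x⟫_ℝ - m) ≤ Real.cosh M := by
    rcases eq_or_lt_of_le hDh with hEq | hPos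
    · have hz : ∀ x ∈ X, ⟪h, x⟫_ℝ = 0 := by
        intro x hx
        have := hbx x hx
        rw [← hEq] at this
        exact abs_eq_zero.mp (le_antisymm this (abs_nonneg _))
      have hm0 : m = 0 := by
        rw [hmdef]
        apply Finset.sum_eq_zero
        intro x hx; rw [hz x hx, mul_zero]
      have hone : ∑ x ∈ X, gibbs X v x * Real.exp (⟪h, x⟫_ℝ - m) = 1 := by
        rw [hm0]
        calc ∑ x ∈ X, gibbs X v x * Real.exp (⟪h, x⟫_ℝ - 0)
            = ∑ x ∈ X, gibbs X v x := by
              apply Finset.sum_congr rfl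
              intro x hx
              rw [hz x hx]; simp
          _ = 1 := sum_gibbs hX v
      rw [hone]
      exact Real.one_le_cosh M
    · have hM : 0 < M := by rw [hMdef]; linarith
      have hcenter : ∑ x ∈ X, gibbs X v x * (⟪h, x⟫_ℝ - m) = 0 := by
        simp only [mul_sub, Finset.sum_sub_distrib, ← Finset.sum_mul, sum_gibbs hX, one_mul,
          hmdef, sub_self]
      calc ∑ x ∈ X, gibbs X v x * Real.exp (⟪h, x⟫_ℝ - m)
          ≤ ∑ x ∈ X, gibbs X v x * (Real.cosh M + (⟪h, x⟫_ℝ - m) * (Real.sinh M / M)) := by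
            apply Finset.sum_le_sum
            intro x hx
            apply mul_le_mul_of_nonneg_left _ (le_of_lt (gibbs_pos hX v x))
            apply exp_chord _ hM
            calc |⟪h, x⟫_ℝ - m| ≤ |⟪h, x⟫_ℝ| + |m| := abs_sub _ _
              _ ≤ D * ‖h‖ + D * ‖h‖ := add_le_add (hbx x hx) hmabs
              _ = M := by rw [hMdef]; ring
        _ = Real.cosh M := by
            simp only [mul_add, Finset.sum_add_distrib, ← Finset.sum_mul, sum_gibbs hX, one_mul]
            rw [show (∑ x ∈ X, gibbs X v x * ((⟪h, x⟫_ℝ - m) * (Real.sinh M / M)))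
              = (∑ x ∈ X, gibbs X v x * (⟪h, x⟫_ℝ - m)) * (Real.sinh M / M) by
                rw [Finset.sum_mul]; exact Finset.sum_congr rfl fun x _ => by ring]
            rw [hcenter, zero_mul, add_zero]
  have hdecomp : ∑ x ∈ X, Real.exp ⟪v + h, x⟫_ℝ
      = Z * Real.exp m * ∑ x ∈ X, gibbs X v x * Real.exp (⟪h, x⟫_ℝ - m) := by
    rw [Finset.mul_sum]
    apply Finset.sum_congr rfl
    intro x hx
    have hg : gibbs X v x = Real.exp ⟪v, x⟫_ℝ / Z := rfl
    rw [inner_add_left, hg]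
    set a := ⟪v, x⟫_ℝ
    set b := ⟪h, x⟫_ℝ
    rw [Real.exp_add, Real.exp_sub]
    field_simp
  have hSpos : 0 < ∑ x ∈ X, gibbs X v x * Real.exp (⟪h, x⟫_ℝ - m) :=
    Finset.sum_pos (fun x _ => mul_pos (gibbs_pos hX v x) (Real.exp_pos _)) hX
  rw [hdecomp, Real.log_mul (by positivity) (ne_of_gt hSpos),
    Real.log_mul (ne_of_gt hZ) (Real.exp_ne_zero _), Real.log_exp, hm]
  have hlogS : Real.log (∑ x ∈ X, gibbs X v x * Real.exp (⟪h, x⟫_ℝ - m))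
      ≤ 2 * D ^ 2 * ‖h‖ ^ 2 := by
    calc Real.log (∑ x ∈ X, gibbs X v x * Real.exp (⟪h, x⟫_ℝ - m))
        ≤ Real.log (Real.cosh M) := Real.log_le_log hSpos key
      _ ≤ Real.log (Real.exp (M ^ 2 / 2)) :=
          Real.log_le_log (Real.cosh_pos M) (Real.cosh_le_exp_half_sq M)
      _ = M ^ 2 / 2 := Real.log_exp _
      _ = 2 * (D * ‖h‖) ^ 2 := by rw [hMdef]; ring
      _ = 2 * D ^ 2 * ‖h‖ ^ 2 := by ring
  linarith

lemma negEnt_eq (hX : X.Nonempty) (v : EuclideanSpace ℝ (Fin d)) :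
    negEnt X v = ⟪v, gibbsMean X v⟫_ℝ - Real.log (∑ y ∈ X, Real.exp ⟪v, y⟫_ℝ) := by
  rw [negEnt, inner_gibbsMean]
  have hlog : ∀ x : EuclideanSpace ℝ (Fin d),
      Real.log (gibbs X v x) = ⟪v, x⟫_ℝ - Real.log (∑ y ∈ X, Real.exp ⟪v, y⟫_ℝ) := by
    intro x
    rw [gibbs, Real.log_div (Real.exp_ne_zero _) (ne_of_gt (Zpos hX v)), Real.log_exp]
  calc ∑ x ∈ X, gibbs X v x * Real.log (gibbs X v x)
      = ∑ x ∈ X, (gibbs X v x * ⟪v, x⟫_ℝ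
          - gibbs X v x * Real.log (∑ y ∈ X, Real.exp ⟪v, y⟫_ℝ)) := by
        apply Finset.sum_congr rfl
        intro x _
        rw [hlog x]; ring
    _ = _ := by
        rw [Finset.sum_sub_distrib, ← Finset.sum_mul, sum_gibbs hX, one_mul]

lemma rloss_eq (hX : X.Nonempty) (β ρ lam : ℝ) (c w : EuclideanSpace ℝ (Fin d)) :
    rloss X β ρ lam c w
      = (1 - β) * ⟪c, gibbsMean X w⟫_ℝ + β * ⟪c, gibbsMean X (ρ • w)⟫_ℝ
        + lam * ((1 - β) * (⟪w, gibbsMean X w⟫_ℝ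
            - Real.log (∑ y ∈ X, Real.exp ⟪w, y⟫_ℝ))
          + (β / ρ) * (⟪ρ • w, gibbsMean X (ρ • w)⟫_ℝ
            - Real.log (∑ y ∈ X, Real.exp ⟪ρ • w, y⟫_ℝ))) := by
  have hs : ∑ x ∈ X, pmix X β ρ w x * ⟪c, x⟫_ℝ
      = (1 - β) * ⟪c, gibbsMean X w⟫_ℝ + β * ⟪c, gibbsMean X (ρ • w)⟫_ℝ := by
    simp only [pmix, add_mul, Finset.sum_add_distrib, inner_gibbsMean, Finset.mul_sum]
    congr 1 <;> · apply Finset.sum_congr rfl; intros; ring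
  rw [rloss, hs, reg, negEnt_eq hX, negEnt_eq hX]

end RlossAux

/-- For every `w`, the sub-optimality gap of the regularized loss at `w`
relative to `−c/λ` satisfies `L_λ(w) − L_λ(−c/λ) ≤ 2λD²‖w + c/λ‖₂²`. -/
theorem rloss_suboptimality_gap_bound {d : ℕ} (hd : 1 ≤ d)
    (X : Finset (EuclideanSpace ℝ (Fin d))) (hX : X.Nonempty)
    (D : ℝ) (hD : ∀ x ∈ X, ‖x‖ ≤ D)
    (β ρ : ℝ) (hβ : β ∈ Set.Ioo (0 : ℝ) 1) (hρ : ρ ∈ Set.Ioo (0 : ℝ) 1)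
    (c : EuclideanSpace ℝ (Fin d)) (lam : ℝ) (hlam : 0 < lam) :
    ∀ w : EuclideanSpace ℝ (Fin d),
      rloss X β ρ lam c w - rloss X β ρ lam c (-(lam⁻¹ • c))
        ≤ 2 * lam * D ^ 2 * ‖w + lam⁻¹ • c‖ ^ 2 := by
  intro w
  have hlamne : lam ≠ 0 := ne_of_gt hlam
  have hρ0 : 0 < ρ := hρ.1
  have hρ1 : ρ < 1 := hρ.2
  have hβ0 : 0 < β := hβ.1
  have hβ1 : β < 1 := hβ.2
  set wst : EuclideanSpace ℝ (Fin d) := -(lam⁻¹ • c) with hwst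
  set u : EuclideanSpace ℝ (Fin d) := w + lam⁻¹ • c with hu
  -- smoothness applications
  have h1 := RlossAux.logsumexp_smooth hX hD w (-u)
  have e1 : w + -u = wst := by rw [hu, hwst]; abel
  rw [e1, inner_neg_left, norm_neg] at h1
  have h2 := RlossAux.logsumexp_smooth hX hD (ρ • w) (-(ρ • u))
  have e2 : ρ • w + -(ρ • u) = ρ • wst := by
    rw [hu, hwst, smul_add, smul_neg]
    abel
  rw [e2, inner_neg_left, real_inner_smul_left, norm_neg, norm_smul,
    Real.norm_eq_abs, abs_of_pos hρ0] at h2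
  -- linear identities for inner products
  have hlin : ∀ z : EuclideanSpace ℝ (Fin d),
      ⟪c, z⟫_ℝ + lam * ⟪w, z⟫_ℝ = lam * ⟪u, z⟫_ℝ := by
    intro z
    rw [hu, inner_add_left, real_inner_smul_left, mul_add, ← mul_assoc,
      mul_inv_cancel₀ hlamne, one_mul, add_comm]
  have hlin0 : ∀ z : EuclideanSpace ℝ (Fin d),
      ⟪c, z⟫_ℝ + lam * ⟪wst, z⟫_ℝ = 0 := by
    intro z
    rw [hwst, inner_neg_left, real_inner_smul_left, mul_neg, ← mul_assoc,
      mul_inv_cancel₀ hlamne, one_mul, add_neg_cancel]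
  have hsmul : ∀ (a z : EuclideanSpace ℝ (Fin d)), ⟪ρ • a, z⟫_ℝ = ρ * ⟪a, z⟫_ℝ :=
    fun a z => real_inner_smul_left _ _ _
  -- abbreviations
  set μw := gibbsMean X w with hμw
  set μs := gibbsMean X wst with hμs
  set μρw := gibbsMean X (ρ • w) with hμρw
  set μρs := gibbsMean X (ρ • wst) with hμρs
  set Fw := Real.log (∑ y ∈ X, Real.exp ⟪w, y⟫_ℝ) with hFw
  set Fs := Real.log (∑ y ∈ X, Real.exp ⟪wst, y⟫_ℝ) with hFs
  set Fρw := Real.log (∑ y ∈ X, Real.exp ⟪ρ • w, y⟫_ℝ) with hFρw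
  set Fρs := Real.log (∑ y ∈ X, Real.exp ⟪ρ • wst, y⟫_ℝ) with hFρs
  set K := 2 * D ^ 2 * ‖u‖ ^ 2 with hK
  have hqρ : (β / ρ) * ρ = β := div_mul_cancel₀ β (ne_of_gt hρ0)
  have main_eq : rloss X β ρ lam c w - rloss X β ρ lam c wst
      = (1 - β) * lam * (⟪u, μw⟫_ℝ - Fw + Fs)
        + lam * (β / ρ) * (ρ * ⟪u, μρw⟫_ℝ - Fρw + Fρs) := by
    rw [RlossAux.rloss_eq hX β ρ lam c w, RlossAux.rloss_eq hX β ρ lam c wst,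
      hsmul w μρw, hsmul wst μρs, ← hFw, ← hFs, ← hFρw, ← hFρs,
      ← hμw, ← hμs, ← hμρw, ← hμρs]
    linear_combination (1 - β) * hlin μw - (1 - β) * hlin0 μs + β * hlin μρw
      - β * hlin0 μρs + lam * (⟪w, μρw⟫_ℝ - ⟪wst, μρs⟫_ℝ - ⟪u, μρw⟫_ℝ) * hqρ
  rw [main_eq]
  have hKnn : 0 ≤ K := by rw [hK]; positivity
  -- fast bound
  have b1 : (1 - β) * lam * (⟪u, μw⟫_ℝ - Fw + Fs) ≤ (1 - β) * lam * K := by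
    apply mul_le_mul_of_nonneg_left _ (mul_nonneg (by linarith) hlam.le)
    rw [hK]; linarith
  -- slow bound
  have b2 : lam * (β / ρ) * (ρ * ⟪u, μρw⟫_ℝ - Fρw + Fρs) ≤ lam * β * K := by
    have hnorm : 2 * D ^ 2 * (ρ * ‖u‖) ^ 2 = ρ ^ 2 * K := by rw [hK]; ring
    have step1 : ρ * ⟪u, μρw⟫_ℝ - Fρw + Fρs ≤ ρ ^ 2 * K := by
      rw [← hnorm]; linarith
    have hq : (0:ℝ) ≤ lam * (β / ρ) := by positivity
    calc lam * (β / ρ) * (ρ * ⟪u, μρw⟫_ℝ - Fρw + Fρs)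
        ≤ lam * (β / ρ) * (ρ ^ 2 * K) := mul_le_mul_of_nonneg_left step1 hq
      _ = lam * β * ρ * K := by
          rw [show ρ ^ 2 = ρ * ρ by ring, show lam * (β / ρ) * (ρ * ρ * K)
            = lam * ((β / ρ) * ρ) * (ρ * K) by ring, hqρ]
          ring
      _ ≤ lam * β * K := by nlinarith [mul_nonneg (mul_nonneg hlam.le hβ0.le) hKnn]
  have hfin : (1 - β) * lam * K + lam * β * K = 2 * lam * D ^ 2 * ‖u‖ ^ 2 := by
    rw [hK]; ring
  linarith

end
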